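/- arXiv:1110.0255 — 6 statements merged into one kernel-verified Lean document; each statement's English description precedes it below -/
import Mathlib

section
/- Let K be a number field, S : Emb(K) → ℤ, and a ∈ ℤ such that S(σ) + S(c∘σ) = a for every σ ∈ Emb(K), where c denotes the standard complex conjugation on ℂ. Then for every nonzero x ∈ K, the square of the complex absolute value of θ^S(x) = ∏_{σ ∈ Emb(K)} σ(x)^{S(σ)} equals |N_{K/ℚ}(x)|^a, where N_{K/ℚ} is the field norm. -/
/-- Composition with complex conjugation, as an equiv on embeddings. -/
def conjEquivAux (K : Type*) [Field K] : (K →+* ℂ) ≃ (K →+* ℂ) :=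
  ⟨fun σ => (starRingEnd ℂ).comp σ, fun σ => (starRingEnd ℂ).comp σ,
   fun σ => by ext k; simp, fun σ => by ext k; simp⟩

@[simp] lemma conjEquivAux_apply (K : Type*) [Field K] (σ : K →+* ℂ) :
    conjEquivAux K σ = (starRingEnd ℂ).comp σ := rfl

/-- If `S : Emb(K) → ℤ` satisfies `S(σ) + S(c∘σ) = a` for every embedding `σ : K → ℂ`
(with `c` the standard complex conjugation), then for every nonzero `x ∈ K` the square of the
complex absolute value of `θ^S(x) = ∏_σ σ(x)^{S(σ)}` equals `|N_{K/ℚ}(x)|^a`. -/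
theorem stmt1 (K : Type*) [Field K] [NumberField K] (S : (K →+* ℂ) → ℤ) (a : ℤ)
    (h : ∀ σ : K →+* ℂ, S σ + S ((starRingEnd ℂ).comp σ) = a)
    (x : K) (hx : x ≠ 0) :
    (‖(∏ σ : K →+* ℂ, σ x ^ S σ)‖) ^ 2
      = ((|Algebra.norm ℚ x| : ℚ) : ℝ) ^ a := by
  set P := ∏ σ : K →+* ℂ, σ x ^ S σ with hP
  have hNorm : (algebraMap ℚ ℂ) (Algebra.norm ℚ x) = ∏ σ : K →+* ℂ, σ x := by
    rw [Algebra.norm_eq_prod_embeddings]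
    exact Fintype.prod_equiv (RingHom.equivRatAlgHom K ℂ) (fun σ => σ x) (fun f => f x)
      (fun σ => rfl) |>.symm
  have hxσ : ∀ σ : K →+* ℂ, σ x ≠ 0 := fun σ hσ => hx (σ.injective (by simpa using hσ))
  have hconj : (starRingEnd ℂ) P = ∏ σ : K →+* ℂ, σ x ^ S ((starRingEnd ℂ).comp σ) := by
    rw [hP, map_prod]
    refine Fintype.prod_equiv (conjEquivAux K) (fun σ => (starRingEnd ℂ) (σ x ^ S σ))
      (fun σ => σ x ^ S ((starRingEnd ℂ).comp σ)) (fun σ => ?_)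
    simp only [conjEquivAux_apply, map_zpow₀]
    congr 1
    congr 1
    ext k
    simp
  have key : P * (starRingEnd ℂ) P = ((algebraMap ℚ ℂ) (Algebra.norm ℚ x)) ^ a := by
    rw [hconj, hP, ← Finset.prod_mul_distrib, hNorm, ← Finset.prod_zpow]
    refine Finset.prod_congr rfl fun σ _ => ?_
    rw [← zpow_add₀ (hxσ σ), h σ]
  have habs : ‖P‖ ^ 2 = ‖P * (starRingEnd ℂ) P‖ := by
    rw [norm_mul, Complex.norm_conj, sq]
  rw [habs, key, norm_zpow]
  congr 1
  rw [show (algebraMap ℚ ℂ) (Algebra.norm ℚ x) = ((Algebra.norm ℚ x : ℚ) : ℂ) by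
    simp [eq_ratCast]]
  rw [← Complex.ofReal_ratCast, Complex.norm_real, Real.norm_eq_abs, Rat.cast_abs]
end

section
/- Let K be a number field and S, S′ : Emb(K) → ℤ. If ∏_{σ ∈ Emb(K)} σ(x)^{S(σ)} = ∏_{σ ∈ Emb(K)} σ(x)^{S′(σ)} for every nonzero x ∈ K, then S = S′. (Equivalently, the group of characters of the form θ^S is free on the set of embeddings: θ^S is trivial only when S = 0.) -/
open Polynomial Finset

/-- If two algebraic characters `θ^S` and `θ^{S'}` agree on all nonzero elements of the number
field `K`, then `S = S'`; i.e. the group of characters of the form `θ^S` is free on the set of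
embeddings `K → ℂ`. -/
theorem stmt2 (K : Type*) [Field K] [NumberField K] (S S' : (K →+* ℂ) → ℤ)
    (h : ∀ x : K, x ≠ 0 →
      ∏ σ : K →+* ℂ, σ x ^ S σ = ∏ σ : K →+* ℂ, σ x ^ S' σ) :
    S = S' := by
  classical
  set T : (K →+* ℂ) → ℤ := fun σ => S σ - S' σ with hT
  suffices hz : ∀ τ : K →+* ℂ, T τ = 0 by
    funext τ
    have := hz τ
    simp only [hT, sub_eq_zero] at this
    exact this
  -- primitive element
  obtain ⟨x, hx⟩ := Field.exists_primitive_element ℚ K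
  have hadj : Algebra.adjoin ℚ {x} = ⊤ := by
    have hint : IsIntegral ℚ x := Algebra.IsIntegral.isIntegral x
    have h1 := IntermediateField.adjoin_simple_toSubalgebra_of_isAlgebraic hint.isAlgebraic
    rw [hx] at h1
    exact h1.symm
  have hdist : ∀ σ σ' : K →+* ℂ, σ x = σ' x → σ = σ' := by
    intro σ σ' hσ
    have h1 : Algebra.adjoin ℚ {x} ≤ AlgHom.equalizer σ.toRatAlgHom σ'.toRatAlgHom :=
      Algebra.adjoin_le (by simpa [AlgHom.mem_equalizer, RingHom.toRatAlgHom] using hσ)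
    rw [hadj] at h1
    ext y
    exact (AlgHom.mem_equalizer σ.toRatAlgHom σ'.toRatAlgHom y).mp (h1 Algebra.mem_top)
  -- the key evaluation identity
  have key : ∀ n : ℕ, (n : K) ≠ x →
      ∏ σ : K →+* ℂ, ((n : ℂ) - σ x) ^ (T σ).toNat
        = ∏ σ : K →+* ℂ, ((n : ℂ) - σ x) ^ (-T σ).toNat := by
    intro n hn
    have hy : (n : K) - x ≠ 0 := sub_ne_zero.mpr hn
    have hσy : ∀ σ : K →+* ℂ, σ ((n : K) - x) = (n : ℂ) - σ x := by
      intro σ; rw [map_sub, map_natCast]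
    have hne : ∀ σ : K →+* ℂ, (n : ℂ) - σ x ≠ 0 := by
      intro σ
      rw [← hσy σ]
      exact fun hc => hy (σ.injective (by rw [hc, map_zero]))
    have hprod1 : ∏ σ : K →+* ℂ, σ ((n : K) - x) ^ T σ = 1 := by
      have h2 := h _ hy
      have h3 : ∏ σ : K →+* ℂ, σ ((n : K) - x) ^ S' σ ≠ 0 :=
        Finset.prod_ne_zero_iff.mpr fun σ _ =>
          zpow_ne_zero _ (by rw [hσy]; exact hne σ)
      simp only [hT]
      calc ∏ σ : K →+* ℂ, σ ((n : K) - x) ^ (S σ - S' σ)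
          = (∏ σ : K →+* ℂ, σ ((n : K) - x) ^ S σ)
            / ∏ σ : K →+* ℂ, σ ((n : K) - x) ^ S' σ := by
            rw [← Finset.prod_div_distrib]
            exact Finset.prod_congr rfl fun σ _ =>
              zpow_sub₀ (by rw [hσy]; exact hne σ) _ _
        _ = 1 := by rw [h2, div_self h3]
    have hstep : ∀ σ : K →+* ℂ,
        ((n : ℂ) - σ x) ^ (T σ).toNat
          = σ ((n : K) - x) ^ T σ * ((n : ℂ) - σ x) ^ (-T σ).toNat := by
      intro σ
      rw [hσy]
      rw [← zpow_natCast ((n : ℂ) - σ x) (T σ).toNat,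
        ← zpow_natCast ((n : ℂ) - σ x) (-T σ).toNat, ← zpow_add₀ (hne σ)]
      congr 1
      omega
    rw [Finset.prod_congr rfl fun σ _ => hstep σ, Finset.prod_mul_distrib, hprod1, one_mul]
  -- polynomial identity
  set P : ℂ[X] := ∏ σ : K →+* ℂ, (X - C (σ x)) ^ (T σ).toNat with hP
  set Q : ℂ[X] := ∏ σ : K →+* ℂ, (X - C (σ x)) ^ (-T σ).toNat with hQ
  have hPQ : P = Q := by
    apply Polynomial.eq_of_infinite_eval_eq
    have hsub : (fun n : ℕ => (n : ℂ)) '' {n : ℕ | (n : K) ≠ x} ⊆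
        {z | eval z P = eval z Q} := by
      rintro - ⟨n, hn, rfl⟩
      simp only [Set.mem_setOf_eq, hP, hQ, eval_prod, eval_pow, eval_sub, eval_X, eval_C]
      exact key n hn
    refine Set.Infinite.mono hsub (Set.Infinite.image ?_ ?_)
    · exact fun a _ b _ hab => Nat.cast_injective hab
    · have hss : {n : ℕ | (n : K) = x}.Subsingleton :=
        fun a ha b hb => Nat.cast_injective (ha.trans hb.symm)
      have hco : {n : ℕ | (n : K) ≠ x} = {n : ℕ | (n : K) = x}ᶜ := rfl
      rw [hco]
      exact Set.Finite.infinite_compl hss.finite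
  -- count roots
  intro τ
  have croots : ∀ m : (K →+* ℂ) → ℕ,
      (∏ σ : K →+* ℂ, (X - C (σ x)) ^ m σ).roots.count (τ x) = m τ := by
    intro m
    have hne0 : (∏ σ : K →+* ℂ, (X - C (σ x)) ^ m σ) ≠ 0 :=
      Finset.prod_ne_zero_iff.mpr fun σ _ => pow_ne_zero _ (X_sub_C_ne_zero _)
    rw [Polynomial.roots_prod _ _ hne0, Multiset.count_bind]
    have hper : ∀ σ : K →+* ℂ,
        ((X - C (σ x)) ^ m σ).roots.count (τ x) = if σ = τ then m σ else 0 := by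
      intro σ
      rw [roots_pow, roots_X_sub_C, Multiset.count_nsmul, Multiset.count_singleton]
      by_cases hστ : σ = τ
      · subst hστ; simp
      · have : τ x ≠ σ x := fun hc => hστ (hdist σ τ hc.symm)
        simp [hστ, this]
    have : ((Finset.univ.val.map fun σ : K →+* ℂ =>
        ((X - C (σ x)) ^ m σ).roots.count (τ x))).sum
        = ∑ σ : K →+* ℂ, if σ = τ then m σ else 0 :=
      Finset.sum_congr rfl fun σ _ => hper σ
    rw [this, Finset.sum_ite_eq' Finset.univ τ m]
    simp
  have h1 : (T τ).toNat = (-T τ).toNat := by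
    have e1 := croots fun σ => (T σ).toNat
    have e2 := croots fun σ => (-T σ).toNat
    rw [← hP] at e1
    rw [← hQ] at e2
    rw [hPQ] at e1
    rw [e2] at e1
    exact e1.symm
  omega
end

section
/- Let K be a number field and a : Emb(K) → ℕ. Then there exists a finite-dimensional complex vector space V of dimension ∑_σ a(σ) together with a ℚ-algebra homomorphism ρ : K → End_ℂ(V) such that for every x ∈ K, the ℂ-linear determinant of ρ(x) equals ∏_{σ ∈ Emb(K)} σ(x)^{a(σ)}. Moreover (V, ρ) is unique up to isomorphism: if (V′, ρ′) is another such pair satisfying the same determinant identity for all x ∈ K, then there is a ℂ-linear isomorphism V ≅ V′ intertwining ρ and ρ′. -/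
open Polynomial Module

section Aux

variable {K : Type*} [Field K] [NumberField K]

private lemma det_of_basis_eigen' {W : Type*} [AddCommGroup W] [Module ℂ W]
    {ι : Type*} [Fintype ι] [DecidableEq ι] (b : Basis ι ℂ W) (f : Module.End ℂ W)
    (d : ι → ℂ) (h : ∀ j, f (b j) = d j • b j) :
    LinearMap.det f = ∏ j, d j := by
  rw [← LinearMap.det_toMatrix b]
  have : LinearMap.toMatrix b b f = Matrix.diagonal d := by
    ext i j
    rw [LinearMap.toMatrix_apply, h j, map_smul, b.repr_self]
    by_cases hij : i = j
    · subst hij; simp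
    · simp [Matrix.diagonal_apply_ne _ hij, Finsupp.single_apply, Ne.symm hij]
  rw [this, Matrix.det_diagonal]

private lemma prod_sigma_pow' (m : (K →+* ℂ) → ℕ) (x : K) :
    ∏ j : Σ σ : K →+* ℂ, Fin (m σ), j.1 x = ∏ σ : K →+* ℂ, σ x ^ m σ := by
  rw [← Finset.univ_sigma_univ, Finset.prod_sigma]
  simp

/-- determinant of `ρ x` for a representation admitting an eigenbasis indexed by
a sigma type. -/
private lemma det_rho' {W : Type*} [AddCommGroup W] [Module ℂ W]
    (m : (K →+* ℂ) → ℕ) (b : Basis (Σ σ : K →+* ℂ, Fin (m σ)) ℂ W)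
    (f : Module.End ℂ W) (x : K) (h : ∀ j : Σ σ : K →+* ℂ, Fin (m σ), f (b j) = j.1 x • b j) :
    LinearMap.det f = ∏ σ : K →+* ℂ, σ x ^ m σ := by
  classical
  rw [det_of_basis_eigen' b f (fun j => j.1 x) h, prod_sigma_pow']

private lemma emb_inj' (θ : K) (hθ : IntermediateField.adjoin ℚ {θ} = ⊤) :
    Function.Injective fun σ : K →+* ℂ => σ θ := by
  intro σ τ h
  have hadj : Algebra.adjoin ℚ ({θ} : Set K) = ⊤ := by
    have := congrArg IntermediateField.toSubalgebra hθ
    rwa [IntermediateField.adjoin_simple_toSubalgebra_of_isAlgebraic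
      (IsIntegral.of_finite ℚ θ).isAlgebraic, IntermediateField.top_toSubalgebra] at this
  have : σ.toRatAlgHom = τ.toRatAlgHom := by
    apply AlgHom.ext_of_adjoin_eq_top hadj
    rintro x rfl
    exact h
  have := congrArg AlgHom.toRingHom this
  simpa using this

private lemma exp_eq' (θ : K) (hinj : Function.Injective fun σ : K →+* ℂ => σ θ)
    {m n : (K →+* ℂ) → ℕ}
    (h : ∀ x : K, ∏ σ : K →+* ℂ, σ x ^ m σ = ∏ σ : K →+* ℂ, σ x ^ n σ) : m = n := by
  classical
  set F : ℂ[X] := ∏ σ : K →+* ℂ, (X - C (σ θ)) ^ m σ with hF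
  set G : ℂ[X] := ∏ σ : K →+* ℂ, (X - C (σ θ)) ^ n σ with hG
  have hFG : F = G := by
    apply eq_of_infinite_eval_eq
    apply Set.Infinite.mono (s := Set.range (Rat.cast : ℚ → ℂ))
    · rintro _ ⟨t, rfl⟩
      have := h ((t : K) - θ)
      simp only [map_sub, map_ratCast] at this
      simpa [hF, hG, eval_prod, eval_pow] using this
    · exact Set.infinite_range_of_injective Rat.cast_injective
  have hroots : ∀ (e : (K →+* ℂ) → ℕ) (τ : K →+* ℂ),
      (∏ σ : K →+* ℂ, (X - C (σ θ)) ^ e σ).roots.count (τ θ) = e τ := by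
    intro e τ
    have hne : ∀ σ : K →+* ℂ, ((X - C (σ θ)) ^ e σ : ℂ[X]) ≠ 0 :=
      fun σ => pow_ne_zero _ (X_sub_C_ne_zero _)
    rw [roots_prod _ _ (Finset.prod_ne_zero_iff.mpr fun σ _ => hne σ)]
    rw [Multiset.count_bind]
    have : ∀ σ : K →+* ℂ, ((X - C (σ θ)) ^ e σ : ℂ[X]).roots.count (τ θ)
        = if σ = τ then e σ else 0 := by
      intro σ
      rw [roots_pow, roots_X_sub_C, Multiset.count_nsmul, Multiset.count_singleton]
      split_ifs with h1 h2 h3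
      · simp
      · exact absurd (hinj h1).symm h2
      · exact absurd (congrArg (fun σ : K →+* ℂ => σ θ) h3.symm) h1
      · simp
    trans (Finset.univ.val.map fun σ : K →+* ℂ => if σ = τ then (e σ : ℕ) else 0).sum
    · exact congrArg _ (Multiset.map_congr rfl fun σ _ => this σ)
    · rw [show (Finset.univ.val.map fun σ : K →+* ℂ => if σ = τ then (e σ : ℕ) else 0).sum
          = ∑ σ : K →+* ℂ, if σ = τ then (e σ : ℕ) else 0 from rfl]
      simp
  funext τ
  have h1 := hroots m τ
  have h2 := hroots n τ
  rw [← hF] at h1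
  rw [← hG] at h2
  rw [← h1, hFG, h2]

private lemma minpoly_map_eq_prod' (θ : K) (hθ : IntermediateField.adjoin ℚ {θ} = ⊤) :
    (minpoly ℚ θ).map (algebraMap ℚ ℂ) = ∏ σ : K →+* ℂ, (X - C (σ θ)) := by
  classical
  set q : ℂ[X] := (minpoly ℚ θ).map (algebraMap ℚ ℂ) with hqdef
  have hint : IsIntegral ℚ θ := IsIntegral.of_finite ℚ θ
  have hmon : q.Monic := (minpoly.monic hint).map _
  have hsep : q.Separable := Polynomial.Separable.map (Algebra.IsSeparable.isSeparable ℚ θ)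
  have hnodup : q.roots.Nodup := nodup_roots hsep
  have hroots_set : Set.range (fun σ : K →+* ℂ => σ θ) = (minpoly ℚ θ).rootSet ℂ :=
    NumberField.Embeddings.range_eval_eq_rootSet_minpoly K ℂ θ
  have himg : (Finset.univ.image fun σ : K →+* ℂ => σ θ) = q.roots.toFinset := by
    apply Finset.coe_injective
    rw [Finset.coe_image, Finset.coe_univ, Set.image_univ, hroots_set, rootSet_def]
  have hq_roots : q.roots = Finset.univ.val.map fun σ : K →+* ℂ => σ θ := by
    have h1 : q.roots.toFinset.val = q.roots := by
      rw [Multiset.toFinset_val, Multiset.dedup_eq_self.mpr hnodup]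
    rw [← h1, ← himg, Finset.image_val_of_injOn (emb_inj' θ hθ).injOn]
  calc q = (q.roots.map fun z => X - C z).prod :=
        (IsAlgClosed.splits q).eq_prod_roots_of_monic hmon
    _ = ∏ σ : K →+* ℂ, (X - C (σ θ)) := by
        rw [hq_roots, Multiset.map_map]; rfl

private lemma ker_prod' {W : Type*} [AddCommGroup W] [Module ℂ W] (T : Module.End ℂ W)
    (c : (K →+* ℂ) → ℂ) (hc : Function.Injective c) (s : Finset (K →+* ℂ)) :
    LinearMap.ker (aeval T (∏ σ ∈ s, (X - C (c σ)))) =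
      ⨆ σ ∈ s, LinearMap.ker (aeval T (X - C (c σ))) := by
  classical
  induction s using Finset.induction_on with
  | empty => simp [Module.End.one_eq_id]
  | insert σ s hσ ih =>
    have hcop : IsCoprime (X - C (c σ)) (∏ τ ∈ s, (X - C (c τ))) :=
      IsCoprime.prod_right fun τ hτ =>
        pairwise_coprime_X_sub_C hc (by rintro rfl; exact hσ hτ)
    rw [Finset.prod_insert hσ, ← Polynomial.sup_ker_aeval_eq_ker_aeval_mul_of_coprime T hcop, ih]
    simp [iSup_or, iSup_sup_eq]

private lemma rho_rat' {W : Type*} [AddCommGroup W] [Module ℂ W]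
    (ρ' : K →+* Module.End ℂ W) (c : ℚ) :
    ρ' (c : K) = algebraMap ℂ (Module.End ℂ W) (c : ℂ) := by
  have h : ρ'.comp ((Rat.castHom K : ℚ →+* K))
      = (algebraMap ℂ (Module.End ℂ W)).comp (Rat.castHom ℂ) := Subsingleton.elim _ _
  simpa using congrArg (fun f : ℚ →+* Module.End ℂ W => f c) h

private lemma rho_aeval' {W : Type*} [AddCommGroup W] [Module ℂ W]
    (ρ' : K →+* Module.End ℂ W) (θ : K) (g : ℚ[X]) :
    ρ' (aeval θ g) = aeval (ρ' θ) (g.map (algebraMap ℚ ℂ)) := by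
  induction g using Polynomial.induction_on' with
  | add p q hp hq => simp [map_add, hp, hq]
  | monomial n c =>
    rw [aeval_monomial, Polynomial.map_monomial, aeval_monomial, map_mul, map_pow]
    congr 1
    have : algebraMap ℚ K c = (c : K) := by
      rw [eq_ratCast (algebraMap ℚ K) c]
    rw [this, rho_rat', eq_ratCast (algebraMap ℚ ℂ) c]

private lemma sigma_aeval' (σ : K →+* ℂ) (θ : K) (g : ℚ[X]) :
    σ (aeval θ g) = (g.map (algebraMap ℚ ℂ)).eval (σ θ) := by
  induction g using Polynomial.induction_on' with
  | add p q hp hq => simp [map_add, hp, hq]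
  | monomial n c =>
    rw [aeval_monomial, Polynomial.map_monomial, eval_monomial, map_mul, map_pow]
    congr 1
    rw [eq_ratCast (algebraMap ℚ K) c, map_ratCast, eq_ratCast (algebraMap ℚ ℂ) c]

/-- every element of `K` is a polynomial in the primitive element `θ` -/
private lemma exists_aeval' (θ : K) (hθ : IntermediateField.adjoin ℚ {θ} = ⊤) (x : K) :
    ∃ g : ℚ[X], aeval θ g = x := by
  have hadj : Algebra.adjoin ℚ ({θ} : Set K) = ⊤ := by
    have := congrArg IntermediateField.toSubalgebra hθ
    rwa [IntermediateField.adjoin_simple_toSubalgebra_of_isAlgebraic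
      (IsIntegral.of_finite ℚ θ).isAlgebraic, IntermediateField.top_toSubalgebra] at this
  have hx : x ∈ Algebra.adjoin ℚ ({θ} : Set K) := hadj ▸ Algebra.mem_top
  rw [Algebra.adjoin_singleton_eq_range_aeval] at hx
  obtain ⟨g, hg⟩ := hx
  exact ⟨g, hg⟩

/-- On the `σ θ`-eigenspace of `ρ' θ`, `ρ' x` acts as `σ x`. -/
private lemma eigen_act' {W : Type*} [AddCommGroup W] [Module ℂ W]
    (ρ' : K →+* Module.End ℂ W) (θ : K) (hθ : IntermediateField.adjoin ℚ {θ} = ⊤)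
    (σ : K →+* ℂ) (x : K) {v : W} (hv : v ∈ (ρ' θ).eigenspace (σ θ)) :
    ρ' x v = σ x • v := by
  by_cases hv0 : v = 0
  · simp [hv0]
  obtain ⟨g, rfl⟩ := exists_aeval' θ hθ x
  rw [rho_aeval', Module.End.aeval_apply_of_hasEigenvector ⟨hv, hv0⟩, sigma_aeval']

/-- Classification: any finite-dimensional representation of `K` on a complex vector space
admits a basis of simultaneous eigenvectors indexed by the embeddings. -/
private lemma classify' (θ : K) (hθ : IntermediateField.adjoin ℚ {θ} = ⊤)
    {W : Type*} [AddCommGroup W] [Module ℂ W] [FiniteDimensional ℂ W]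
    (ρ' : K →+* Module.End ℂ W) :
    ∃ (m : (K →+* ℂ) → ℕ) (b : Basis (Σ σ : K →+* ℂ, Fin (m σ)) ℂ W),
      ∀ (x : K) (j : Σ σ : K →+* ℂ, Fin (m σ)), ρ' x (b j) = j.1 x • b j := by
  classical
  set T : Module.End ℂ W := ρ' θ with hT
  set U : (K →+* ℂ) → Submodule ℂ W := fun σ => T.eigenspace (σ θ) with hU
  have hinj := emb_inj' θ hθ
  have indep : iSupIndep U := (Module.End.eigenspaces_iSupIndep T).comp hinj
  have haq : aeval T ((minpoly ℚ θ).map (algebraMap ℚ ℂ)) = 0 := by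
    rw [← rho_aeval' ρ' θ (minpoly ℚ θ), minpoly.aeval, map_zero]
  have hsup : ⨆ σ, U σ = ⊤ := by
    rw [minpoly_map_eq_prod' θ hθ] at haq
    have h1 : LinearMap.ker (aeval T (∏ σ : K →+* ℂ, (X - C (σ θ)))) = ⊤ :=
      LinearMap.ker_eq_top.mpr haq
    rw [ker_prod' T _ hinj] at h1
    rw [← h1]
    simp only [hU]
    apply le_antisymm
    · exact iSup_le fun σ => by
        rw [Module.End.eigenspace_def]
        refine le_trans ?_ (le_iSup₂ σ (Finset.mem_univ σ))
        apply le_of_eq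
        congr 1
        rw [map_sub, aeval_X, aeval_C, Module.algebraMap_end_eq_smul_id]
        rfl
    · refine iSup₂_le fun σ _ => ?_
      refine le_trans ?_ (le_iSup _ σ)
      apply le_of_eq
      rw [Module.End.eigenspace_def]
      congr 1
      rw [map_sub, aeval_X, aeval_C, Module.algebraMap_end_eq_smul_id]
      rfl
  have internal : DirectSum.IsInternal U :=
    DirectSum.isInternal_submodule_of_iSupIndep_of_iSup_eq_top indep hsup
  refine ⟨fun σ => finrank ℂ (U σ), internal.collectedBasis fun σ => Module.finBasis ℂ (U σ),
    fun x j => ?_⟩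
  exact eigen_act' ρ' θ hθ j.1 x
    (internal.collectedBasis_mem (fun σ => Module.finBasis ℂ (U σ)) j)

end Aux

noncomputable def rhoCan {K : Type*} [Field K] {ι : Type} [Fintype ι]
    (κ : ι → (K →+* ℂ)) : K →+* Module.End ℂ (ι → ℂ) where
  toFun x := LinearMap.pi fun j => (κ j x) • LinearMap.proj j
  map_one' := by ext v j; simp
  map_mul' x y := by ext v j; simp [Module.End.mul_apply, mul_assoc]
  map_zero' := by ext v j; simp
  map_add' x y := by ext v j; simp [add_mul]

lemma rhoCan_basis {K : Type*} [Field K] {ι : Type} [Fintype ι] [DecidableEq ι]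
    (κ : ι → (K →+* ℂ)) (x : K) (j : ι) :
    rhoCan κ x (Pi.basisFun ℂ ι j) = κ j x • Pi.basisFun ℂ ι j := by
  funext k
  simp only [rhoCan, RingHom.coe_mk, MonoidHom.coe_mk, OneHom.coe_mk, LinearMap.pi_apply,
    LinearMap.smul_apply, LinearMap.proj_apply, Pi.smul_apply, smul_eq_mul]
  by_cases hk : k = j
  · subst hk; simp
  · simp [Pi.basisFun_apply, Pi.single_eq_of_ne hk]

/-- For a number field `K` and `a : Emb(K) → ℕ`, there exists a finite-dimensional complex
vector space `V` of dimension `∑ σ, a σ` together with a (ℚ-algebra, equivalently ring)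
homomorphism `ρ : K → End_ℂ(V)` whose `ℂ`-linear determinant is `x ↦ ∏ σ, σ(x)^{a σ}`;
moreover such a pair `(V, ρ)` is unique up to isomorphism. -/
theorem stmt3 (K : Type*) [Field K] [NumberField K] (a : (K →+* ℂ) → ℕ) :
    ∃ (V : Type) (_ : AddCommGroup V) (_ : Module ℂ V) (_ : FiniteDimensional ℂ V)
      (ρ : K →+* Module.End ℂ V),
      Module.finrank ℂ V = ∑ σ : K →+* ℂ, a σ ∧
      (∀ x : K, LinearMap.det (ρ x) = ∏ σ : K →+* ℂ, σ x ^ a σ) ∧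
      (∀ (V' : Type) (_ : AddCommGroup V') (_ : Module ℂ V') (_ : FiniteDimensional ℂ V')
        (ρ' : K →+* Module.End ℂ V'),
        (∀ x : K, LinearMap.det (ρ' x) = ∏ σ : K →+* ℂ, σ x ^ a σ) →
        ∃ e : V ≃ₗ[ℂ] V', ∀ (x : K) (v : V), e (ρ x v) = ρ' x (e v)) := by
  classical
  obtain ⟨θ, hθ⟩ := Field.exists_primitive_element ℚ K
  have hinj := emb_inj' θ hθ
  set N : ℕ := ∑ σ : K →+* ℂ, a σ with hN
  have hcard : Fintype.card (Σ σ : K →+* ℂ, Fin (a σ)) = Fintype.card (Fin N) := by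
    simp [hN]
  let φ : (Σ σ : K →+* ℂ, Fin (a σ)) ≃ Fin N := Fintype.equivOfCardEq hcard
  let κ : Fin N → (K →+* ℂ) := fun j => (φ.symm j).1
  have hdetCan : ∀ x : K, LinearMap.det (rhoCan κ x) = ∏ σ : K →+* ℂ, σ x ^ a σ := by
    intro x
    rw [det_of_basis_eigen' (Pi.basisFun ℂ (Fin N)) (rhoCan κ x) (fun j => κ j x)
      (fun j => rhoCan_basis κ x j)]
    rw [show ∏ j : Fin N, κ j x = ∏ s : Σ σ : K →+* ℂ, Fin (a σ), s.1 x from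
      (Equiv.prod_comp φ.symm (fun s : Σ σ : K →+* ℂ, Fin (a σ) => s.1 x)).symm ▸ rfl]
    exact prod_sigma_pow' a x
  refine ⟨Fin N → ℂ, inferInstance, inferInstance, inferInstance, rhoCan κ, ?_, hdetCan, ?_⟩
  · simp [Module.finrank_pi]
  · intro W _ _ _ ρ' hdet
    obtain ⟨m, b, hb⟩ := classify' θ hθ ρ'
    have hma : m = a := by
      apply exp_eq' θ hinj
      intro x
      rw [← hdet x, det_rho' m b (ρ' x) x (fun j => hb x j)]
    subst hma
    refine ⟨(Pi.basisFun ℂ (Fin N)).equiv b φ.symm, fun x v => ?_⟩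
    have key : (((Pi.basisFun ℂ (Fin N)).equiv b φ.symm).toLinearMap).comp
        ((rhoCan κ x : Module.End ℂ (Fin N → ℂ)) : (Fin N → ℂ) →ₗ[ℂ] (Fin N → ℂ))
        = ((ρ' x : Module.End ℂ W) : W →ₗ[ℂ] W).comp
          ((Pi.basisFun ℂ (Fin N)).equiv b φ.symm).toLinearMap := by
      apply (Pi.basisFun ℂ (Fin N)).ext
      intro j
      simp only [LinearMap.coe_comp, Function.comp_apply, LinearEquiv.coe_coe]
      rw [rhoCan_basis κ x j, map_smul, Basis.equiv_apply]
      exact (hb x (φ.symm j)).symm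
    exact LinearMap.congr_fun key v
end

section
/- Let g ≥ 1 and k ≥ 1 be integers and q a prime with q ≡ 3 (mod 2^k). If M is an element of the symplectic group Sp_{2g}(𝔽_q) whose multiplicative order is exactly 2^k, then 2^{k−1} ≤ 2g. -/
open Polynomial Matrix

private lemma three_pow_mod8 (i : ℕ) : 3 ^ i % 8 = 1 ∨ 3 ^ i % 8 = 3 := by
  induction i with
  | zero => left; rfl
  | succ n ih =>
    rcases ih with h | h
    · right; rw [pow_succ, Nat.mul_mod, h]
    · left; rw [pow_succ, Nat.mul_mod, h]

private lemma three_pow_two_pow (s : ℕ) (hs : 1 ≤ s) :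
    ∃ u : ℤ, ¬ (2 ∣ u) ∧ (3:ℤ) ^ (2 ^ s) - 1 = 2 ^ (s + 2) * u := by
  induction s, hs using Nat.le_induction with
  | base => exact ⟨1, by norm_num⟩
  | succ s hs ih =>
    obtain ⟨u, hu, h⟩ := ih
    refine ⟨u + 2 ^ (s+1) * u ^ 2, ?_, ?_⟩
    · intro h2
      have hd : (2:ℤ) ∣ 2 ^ (s+1) * u ^ 2 :=
        dvd_mul_of_dvd_left (dvd_pow_self 2 (Nat.succ_ne_zero s)) _
      exact hu (by omega)
    · have h3 : (3:ℤ) ^ 2 ^ (s+1) = ((3:ℤ) ^ 2 ^ s) ^ 2 := by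
        rw [← pow_mul, pow_succ]
      have h4 : (3:ℤ) ^ 2 ^ s = 2 ^ (s+2) * u + 1 := by linarith
      rw [h3, h4]; ring

private lemma nt_lemma {k t : ℕ} (hk3 : 3 ≤ k) (htpos : t ≠ 0)
    (ht : 3 ^ t ≡ 1 [MOD 2 ^ k]) : 2 ^ (k - 2) ∣ t := by
  obtain ⟨s, m, hm, rfl⟩ := Nat.exists_eq_pow_mul_and_not_dvd htpos 2 (by norm_num)
  have hdvd : ((2:ℤ) ^ k) ∣ (3:ℤ) ^ (2 ^ s * m) - 1 := by
    have h1 := ht.dvd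
    push_cast at h1
    have := dvd_neg.mpr h1
    rwa [neg_sub] at this
  set y : ℤ := (3:ℤ) ^ (2 ^ s) with hy
  have hym : (3:ℤ) ^ (2 ^ s * m) = y ^ m := by rw [hy, ← pow_mul]
  have hgeom : y ^ m - 1 = (∑ i ∈ Finset.range m, y ^ i) * (y - 1) :=
    (geom_sum_mul y m).symm
  set S : ℤ := ∑ i ∈ Finset.range m, y ^ i with hS
  have hSodd : ¬ (2:ℤ) ∣ S := by
    intro h2
    have h0 : ((S : ℤ) : ZMod 2) = 0 := by
      exact_mod_cast (ZMod.intCast_zmod_eq_zero_iff_dvd S 2).mpr h2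
    rw [hS] at h0
    push_cast at h0
    have h3 : ((3:ZMod 2)) = 1 := by decide
    have hy2 : ((y : ℤ) : ZMod 2) = 1 := by
      rw [hy]; push_cast; rw [h3]; exact one_pow _
    rw [hy2] at h0
    simp only [one_pow, Finset.sum_const, Finset.card_range, nsmul_eq_mul,
      mul_one] at h0
    exact hm ((ZMod.natCast_eq_zero_iff m 2).mp h0)
  have hcopS : IsCoprime ((2:ℤ) ^ k) S :=
    (Int.prime_two.coprime_iff_not_dvd.mpr hSodd).pow_left
  have hdvd2 : ((2:ℤ) ^ k) ∣ (y - 1) := by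
    apply hcopS.dvd_of_dvd_mul_left
    rw [hym, hgeom] at hdvd
    exact hdvd
  rcases Nat.eq_zero_or_pos s with hs0 | hs1
  · subst hs0
    simp only [hy, pow_zero, pow_one] at hdvd2
    norm_num at hdvd2
    have hle := Int.le_of_dvd (by norm_num) hdvd2
    have h8 : (2:ℤ) ^ 3 ≤ 2 ^ k := pow_le_pow_right₀ (by norm_num) hk3
    norm_num at h8
    linarith
  · obtain ⟨u, hu, hyu⟩ := three_pow_two_pow s hs1
    rw [hy] at hdvd2
    rw [hyu] at hdvd2
    have hcopu : IsCoprime ((2:ℤ) ^ k) u :=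
      (Int.prime_two.coprime_iff_not_dvd.mpr hu).pow_left
    have hdvd3 : ((2:ℤ) ^ k) ∣ 2 ^ (s + 2) := hcopu.dvd_of_dvd_mul_right hdvd2
    have hdn : (2:ℕ) ^ k ∣ 2 ^ (s + 2) := by exact_mod_cast hdvd3
    have hks : k ≤ s + 2 := (Nat.pow_dvd_pow_iff_le_right (by norm_num)).mp hdn
    exact dvd_mul_of_dvd_left (pow_dvd_pow 2 (by omega)) m

set_option maxHeartbeats 1000000 in
/-- Let `g, k ≥ 1` and `q` a prime with `q ≡ 3 (mod 2^k)`.  If `M` is an element of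
`Sp_{2g}(𝔽_q)` of multiplicative order exactly `2^k`, then `2^{k-1} ≤ 2g`. -/
theorem stmt10 (g k : ℕ) (hg : 1 ≤ g) (hk : 1 ≤ k) (q : ℕ) (hq : q.Prime)
    (hq3 : q ≡ 3 [MOD 2 ^ k])
    (M : Matrix.symplecticGroup (Fin g) (ZMod q)) (hM : orderOf M = 2 ^ k) :
    2 ^ (k - 1) ≤ 2 * g := by
  classical
  rcases le_or_gt k 2 with hk2 | hk3'
  · calc 2 ^ (k - 1) ≤ 2 ^ 1 := Nat.pow_le_pow_right (by norm_num) (by omega)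
      _ ≤ 2 * g := by omega
  have hk3 : 3 ≤ k := hk3'
  -- basic facts about q
  haveI : Fact q.Prime := ⟨hq⟩
  have hqodd : q % 2 = 1 := by
    have h2 : q ≡ 3 [MOD 2] := hq3.of_dvd (dvd_pow_self 2 (by omega))
    simpa [Nat.ModEq] using h2
  have hq2 : 2 < q := by
    have := hq.two_le
    omega
  haveI : Fact (2 < q) := ⟨hq2⟩
  set F := ZMod q
  set K := AlgebraicClosure F with hK
  haveI : CharP K q := charP_of_injective_algebraMap (algebraMap F K).injective q
  have hneg : (-1 : K) ≠ 1 := CharP.neg_one_ne_one K q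
  -- the matrix and its powers
  set A : Matrix (Fin g ⊕ Fin g) (Fin g ⊕ Fin g) F := M.1 with hA
  have hA1 : A ^ 2 ^ k = 1 := by
    have h1 : M ^ 2 ^ k = 1 := by rw [← hM]; exact pow_orderOf_eq_one M
    rw [hA, ← SubmonoidClass.coe_pow, h1]; rfl
  have hA2 : A ^ 2 ^ (k - 1) ≠ 1 := by
    intro h
    have h1 : M ^ 2 ^ (k - 1) = 1 := by
      apply Subtype.ext
      rw [SubmonoidClass.coe_pow]
      exact h
    have h2 := orderOf_dvd_of_pow_eq_one h1
    rw [hM] at h2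
    have h3 := Nat.le_of_dvd (by positivity) h2
    have h4 : (2:ℕ) ^ (k-1) < 2 ^ k := Nat.pow_lt_pow_right (by norm_num) (by omega)
    omega
  -- minimal polynomial and a root of order 2^k
  set m : F[X] := minpoly F A with hm
  have hfact : (X ^ 2 ^ k - 1 : F[X]) = (X ^ 2 ^ (k-1) - 1) * (X ^ 2 ^ (k-1) + 1) := by
    have hkk : (2:ℕ) ^ k = 2 ^ (k-1) * 2 := by
      rw [← pow_succ]; congr 1; omega
    calc (X ^ 2 ^ k - 1 : F[X]) = (X ^ 2 ^ (k-1)) ^ 2 - 1 := by rw [← pow_mul, ← hkk]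
      _ = (X ^ 2 ^ (k-1) - 1) * (X ^ 2 ^ (k-1) + 1) := by ring
  have hm_dvd : m ∣ (X ^ 2 ^ (k-1) - 1) * (X ^ 2 ^ (k-1) + 1) := by
    rw [← hfact]
    apply minpoly.dvd
    simp [hA1]
  have hm_not : ¬ m ∣ (X ^ 2 ^ (k-1) - 1 : F[X]) := by
    intro h
    obtain ⟨c, hc⟩ := h
    have h1 : Polynomial.aeval A (X ^ 2 ^ (k-1) - 1 : F[X]) = 0 := by
      rw [hc, _root_.map_mul, minpoly.aeval, zero_mul]
    simp only [map_sub, map_pow, aeval_X, _root_.map_one, sub_eq_zero] at h1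
    exact hA2 h1
  obtain ⟨m₁, m₂, h1, h2, hm12⟩ := exists_dvd_and_dvd_of_dvd_mul hm_dvd
  have hm₂nu : ¬ IsUnit m₂ := by
    intro h
    exact hm_not (by rw [hm12]; exact h.mul_right_dvd.mpr h1)
  have hb0 : (X ^ 2 ^ (k-1) + 1 : F[X]) ≠ 0 := by
    intro hh
    have := congrArg (Polynomial.eval 0) hh
    simp [zero_pow (show 2 ^ (k-1) ≠ 0 by positivity)] at this
  have hm₂0 : m₂ ≠ 0 := by
    rintro rfl
    exact hb0 (zero_dvd_iff.mp h2)
  have hdeg : m₂.degree ≠ 0 := fun h => hm₂nu (Polynomial.isUnit_iff_degree_eq_zero.mpr h)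
  set f := algebraMap F K with hf
  obtain ⟨ζ, hζroot⟩ := IsAlgClosed.exists_root (m₂.map f)
    (by rwa [degree_map_eq_of_injective (algebraMap F K).injective])
  have hζb : ζ ^ 2 ^ (k-1) = -1 := by
    have hdvd : m₂.map f ∣ (X ^ 2 ^ (k-1) + 1 : K[X]) := by
      have := Polynomial.map_dvd f h2
      simpa using this
    obtain ⟨c, hc⟩ := hdvd
    have : Polynomial.eval ζ (X ^ 2 ^ (k-1) + 1 : K[X]) = 0 := by
      rw [hc, eval_mul, hζroot.eq_zero, zero_mul]
    simp only [eval_add, eval_pow, eval_X, eval_one] at this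
    linear_combination this
  have hζ2k : ζ ^ 2 ^ k = 1 := by
    have hkk : (2:ℕ) ^ k = 2 ^ (k-1) * 2 := by rw [← pow_succ]; congr 1; omega
    rw [hkk, pow_mul, hζb, neg_one_sq]
  have hζ0 : ζ ≠ 0 := by
    rintro rfl
    rw [zero_pow (show 2 ^ k ≠ 0 by positivity)] at hζ2k
    exact zero_ne_one hζ2k
  -- order of ζ as a unit
  set ζu : Kˣ := Units.mk0 ζ hζ0 with hζu
  have hζu2k : ζu ^ 2 ^ k = 1 := by
    ext; rw [Units.val_pow_eq_pow_val]; exact hζ2k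
  have horder : orderOf ζu = 2 ^ k := by
    have hdvd := orderOf_dvd_of_pow_eq_one hζu2k
    obtain ⟨j, hj, hordj⟩ := (Nat.dvd_prime_pow Nat.prime_two).mp hdvd
    rcases lt_or_eq_of_le hj with hj' | hj'
    · exfalso
      have hdvd2 : orderOf ζu ∣ 2 ^ (k-1) := hordj ▸ pow_dvd_pow 2 (by omega)
      have := orderOf_dvd_iff_pow_eq_one.mp hdvd2
      have hv := congrArg Units.val this
      rw [Units.val_pow_eq_pow_val] at hv
      simp only [hζu, Units.val_mk0, Units.val_one] at hv
      rw [hζb] at hv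
      exact hneg hv
    · rw [hordj, hj']
  -- the characteristic polynomial over K
  set B : Matrix (Fin g ⊕ Fin g) (Fin g ⊕ Fin g) K := A.map f with hB
  set P : K[X] := B.charpoly with hP
  have hPA : P = (A.charpoly).map f := Matrix.charpoly_map A f
  have hζP : Polynomial.eval ζ P = 0 := by
    have hd1 : m ∣ A.charpoly := minpoly.dvd F A (Matrix.aeval_self_charpoly A)
    have hd2 : m₂ ∣ A.charpoly := dvd_trans (hm12 ▸ dvd_mul_left m₂ m₁) hd1
    have hd3 : m₂.map f ∣ P := hPA ▸ Polynomial.map_dvd f hd2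
    obtain ⟨c, hc⟩ := hd3
    rw [hc, eval_mul, hζroot.eq_zero, zero_mul]
  -- roots are closed under x ↦ x^q (Frobenius)
  have hfrob : ∀ x : K, Polynomial.eval x P = 0 → Polynomial.eval (x ^ q) P = 0 := by
    intro x hx
    have hcomp : (frobenius K q).comp f = f := RingHom.ext_zmod _ _
    have h1 : Polynomial.eval x P = eval₂ f x A.charpoly := by rw [hPA, eval_map]
    have h2 : Polynomial.eval (x ^ q) P = eval₂ f (x ^ q) A.charpoly := by
      rw [hPA, eval_map]
    have h3 := Polynomial.hom_eval₂ A.charpoly f (frobenius K q) x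
    rw [hcomp] at h3
    rw [h2, ← frobenius_def (R := K) (p := q) x, ← h3, ← h1, hx, map_zero]
  have hiter : ∀ x : K, Polynomial.eval x P = 0 →
      ∀ i : ℕ, Polynomial.eval (x ^ q ^ i) P = 0 := by
    intro x hx i
    induction i with
    | zero => simpa using hx
    | succ n ih =>
      rw [pow_succ, pow_mul]
      exact hfrob _ ih
  -- symplectic structure: ζ⁻¹ is also a root
  set JK := Matrix.J (Fin g) K with hJK
  have hJmap : (Matrix.J (Fin g) F).map f = JK := by
    rw [hJK, Matrix.J, Matrix.J]
    ext i j
    rcases i with i | i <;> rcases j with j | j <;>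
      simp [Matrix.map_apply, Matrix.one_apply, apply_ite f]
  have hBmem : B ∈ Matrix.symplecticGroup (Fin g) K := by
    rw [SymplecticGroup.mem_iff]
    have hMmem := M.prop
    rw [SymplecticGroup.mem_iff] at hMmem
    have := congrArg (fun (N : Matrix (Fin g ⊕ Fin g) (Fin g ⊕ Fin g) F) => N.map f) hMmem
    simp only [Matrix.map_mul] at this
    rw [Matrix.transpose_map] at this
    rw [hJmap] at this
    exact this
  have hsymp' : Bᵀ * JK * B = JK := SymplecticGroup.mem_iff'.mp hBmem
  have hdetB : IsUnit B.det := SymplecticGroup.symplectic_det hBmem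
  have hdetJ : IsUnit JK.det := Matrix.isUnit_det_J (Fin g) K
  have heval : ∀ x : K, Polynomial.eval x P =
      Matrix.det (x • (1 : Matrix (Fin g ⊕ Fin g) (Fin g ⊕ Fin g) K) - B) := by
    intro x
    rw [hP, Matrix.charpoly, _root_.eval_det, Matrix.matPolyEquiv_charmatrix]
    congr 1
    rw [eval_sub, eval_X, eval_C]
    congr 1
    rw [Matrix.scalar_apply, Matrix.smul_one_eq_diagonal]
  have hdet0 : Matrix.det (ζ • (1 : Matrix (Fin g ⊕ Fin g) (Fin g ⊕ Fin g) K) - B) = 0 := by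
    rw [← heval]; exact hζP
  have key : Bᵀ * JK * (ζ⁻¹ • 1 - B) = (-ζ⁻¹) • ((ζ • 1 - Bᵀ) * JK) := by
    have h1 : Bᵀ * JK * (ζ⁻¹ • 1 - B) = ζ⁻¹ • (Bᵀ * JK) - JK := by
      rw [mul_sub, mul_smul_comm, mul_one, hsymp']
    rw [h1, sub_mul, smul_mul_assoc, one_mul]
    rw [smul_sub, smul_smul, neg_mul, inv_mul_cancel₀ hζ0, neg_smul, neg_smul, one_smul,
      sub_neg_eq_add, neg_add_eq_sub]
  have hdet2 : Matrix.det (ζ⁻¹ • (1 : Matrix (Fin g ⊕ Fin g) (Fin g ⊕ Fin g) K) - B) = 0 := by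
    have hd := congrArg Matrix.det key
    rw [Matrix.det_mul, Matrix.det_mul, Matrix.det_smul, Matrix.det_mul] at hd
    have htr : (ζ • 1 - Bᵀ) = (ζ • (1 : Matrix (Fin g ⊕ Fin g) (Fin g ⊕ Fin g) K) - B)ᵀ := by
      rw [Matrix.transpose_sub, Matrix.transpose_smul, Matrix.transpose_one]
    rw [htr, Matrix.det_transpose, Matrix.det_transpose, hdet0, zero_mul, mul_zero] at hd
    rcases mul_eq_zero.mp hd with hd' | hd'
    · exfalso
      rcases mul_eq_zero.mp hd' with hd'' | hd''
      · exact hdetB.ne_zero hd''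
      · exact hdetJ.ne_zero hd''
    · exact hd'
  have hζinvP : Polynomial.eval ζ⁻¹ P = 0 := by rw [heval]; exact hdet2
  -- counting distinct roots
  have hq8 : q ≡ 3 [MOD 8] := hq3.of_dvd (by
    calc (8:ℕ) = 2 ^ 3 := by norm_num
      _ ∣ 2 ^ k := pow_dvd_pow 2 hk3)
  have hcop2q : Nat.Coprime 2 q := (Nat.Prime.coprime_iff_not_dvd Nat.prime_two).mpr
    (by omega)
  have hinj1 : ∀ i j : ℕ, i ≤ j → j - i < 2 ^ (k-2) → ζ ^ q ^ i = ζ ^ q ^ j → i = j := by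
    intro i j hij hj h
    have hu : ζu ^ q ^ i = ζu ^ q ^ j := by
      ext
      rw [Units.val_pow_eq_pow_val, Units.val_pow_eq_pow_val]
      exact h
    have hmod : q ^ i ≡ q ^ j [MOD 2 ^ k] := by
      rw [← horder]
      exact pow_eq_pow_iff_modEq.mp hu
    have hle : q ^ i ≤ q ^ j := Nat.pow_le_pow_right hq.pos hij
    have hd1 : 2 ^ k ∣ q ^ j - q ^ i := (Nat.modEq_iff_dvd' hle).mp hmod
    have he : q ^ j - q ^ i = q ^ i * (q ^ (j-i) - 1) := by
      rw [Nat.mul_sub, mul_one, ← pow_add]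
      congr 2
      omega
    rw [he] at hd1
    have hd2 : 2 ^ k ∣ q ^ (j-i) - 1 :=
      ((hcop2q.pow k i).dvd_of_dvd_mul_left hd1)
    have hd4 : q ^ (j-i) ≡ 1 [MOD 2 ^ k] :=
      ((Nat.modEq_iff_dvd' (Nat.one_le_pow _ _ hq.pos)).mpr hd2).symm
    have hd5 : 3 ^ (j-i) ≡ 1 [MOD 2 ^ k] := ((hq3.pow (j-i)).symm).trans hd4
    by_contra hne
    have hji : j - i ≠ 0 := by omega
    have := Nat.le_of_dvd (by omega) (nt_lemma hk3 hji hd5)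
    omega
  have hmix : ∀ i j : ℕ, ζ ^ q ^ i ≠ ζ⁻¹ ^ q ^ j := by
    intro i j h
    have h1 : ζ ^ (q ^ i + q ^ j) = 1 := by
      rw [pow_add, h, inv_pow]
      exact inv_mul_cancel₀ (pow_ne_zero _ hζ0)
    have hu : ζu ^ (q ^ i + q ^ j) = 1 := by
      ext; rw [Units.val_pow_eq_pow_val]; exact h1
    have hdvd : 2 ^ k ∣ q ^ i + q ^ j := horder ▸ orderOf_dvd_of_pow_eq_one hu
    have h8 : 8 ∣ q ^ i + q ^ j := by
      have h83 : (8:ℕ) ∣ 2 ^ k := by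
        calc (8:ℕ) = 2 ^ 3 := by norm_num
          _ ∣ 2 ^ k := pow_dvd_pow 2 hk3
      exact h83.trans hdvd
    have hqi : q ^ i % 8 = 3 ^ i % 8 := hq8.pow i
    have hqj : q ^ j % 8 = 3 ^ j % 8 := hq8.pow j
    have h3i := three_pow_mod8 i
    have h3j := three_pow_mod8 j
    omega
  set E := 2 ^ (k - 2) with hE
  set r : Fin E ⊕ Fin E → K :=
    Sum.elim (fun i => ζ ^ q ^ (i : ℕ)) (fun i => ζ⁻¹ ^ q ^ (i : ℕ)) with hr
  have hroots : ∀ z, Polynomial.eval (r z) P = 0 := by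
    rintro (i | i)
    · exact hiter ζ hζP i
    · exact hiter ζ⁻¹ hζinvP i
  have hrinj : Function.Injective r := by
    rintro (i | i) (j | j) h <;> simp only [hr, Sum.elim_inl, Sum.elim_inr] at h
    · rcases le_total (i : ℕ) (j : ℕ) with hij | hij
      · exact congrArg Sum.inl (Fin.ext (hinj1 i j hij (by omega) h))
      · exact congrArg Sum.inl (Fin.ext (hinj1 j i hij (by omega) h.symm).symm)
    · exact absurd h (hmix i j)
    · exact absurd h.symm (hmix j i)
    · have h' : ζ ^ q ^ (i : ℕ) = ζ ^ q ^ (j : ℕ) := by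
        rw [inv_pow, inv_pow] at h
        exact inv_injective h
      rcases le_total (i : ℕ) (j : ℕ) with hij | hij
      · exact congrArg Sum.inr (Fin.ext (hinj1 i j hij (by omega) h'))
      · exact congrArg Sum.inr (Fin.ext (hinj1 j i hij (by omega) h'.symm).symm)
  have hP0 : P ≠ 0 := (Matrix.charpoly_monic B).ne_zero
  have hsub : (Finset.univ.image r) ⊆ P.roots.toFinset := by
    intro x hx
    obtain ⟨z, _, rfl⟩ := Finset.mem_image.mp hx
    rw [Multiset.mem_toFinset, Polynomial.mem_roots hP0]
    exact hroots z
  have hc1 : 2 * E ≤ (Finset.univ.image r).card := by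
    rw [Finset.card_image_of_injective _ hrinj]
    simp [Fintype.card_sum]
    omega
  have hc2 : (Finset.univ.image r).card ≤ P.roots.toFinset.card :=
    Finset.card_le_card hsub
  have hc3 : P.roots.toFinset.card ≤ Multiset.card P.roots :=
    Multiset.toFinset_card_le _
  have hc4 : Multiset.card P.roots ≤ P.natDegree := P.card_roots'
  have hc5 : P.natDegree = 2 * g := by
    rw [hP, Matrix.charpoly_natDegree_eq_dim]
    simp [Fintype.card_sum]
    omega
  have hfin : (2:ℕ) ^ (k-1) = 2 * E := by
    rw [hE, ← pow_succ']
    congr 1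
    omega
  omega
end

section
/- For every integer g ≥ 1, the product ∏ p^k, taken over all prime powers p^k (p prime, k ≥ 1) satisfying (p−1)p^{k−1} ≤ 2g < (p−1)p^k, is strictly less than 12^{4g²}. -/
/-- For every `g ≥ 1`, the product `∏ p^k`, over all prime powers `p^k` satisfying
`(p-1)p^{k-1} ≤ 2g < (p-1)p^k`, is strictly less than `12^(4g²)`. -/
theorem stmt12 (g : ℕ) (hg : 1 ≤ g) :
    (∏ᶠ n ∈ {n : ℕ | ∃ p k : ℕ, p.Prime ∧ 1 ≤ k ∧ n = p ^ k ∧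
        (p - 1) * p ^ (k - 1) ≤ 2 * g ∧ 2 * g < (p - 1) * p ^ k}, n)
      < 12 ^ (4 * g ^ 2) := by
  set S : Set ℕ := {n : ℕ | ∃ p k : ℕ, p.Prime ∧ 1 ≤ k ∧ n = p ^ k ∧
        (p - 1) * p ^ (k - 1) ≤ 2 * g ∧ 2 * g < (p - 1) * p ^ k} with hSdef
  -- every element is ≤ 2g(2g+1)
  have hM : ∀ n ∈ S, n ≤ 2 * g * (2 * g + 1) := by
    rintro n ⟨p, k, hp, hk, rfl, h1, h2⟩
    have hp2 : 2 ≤ p := hp.two_le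
    have hpow1 : 1 ≤ p ^ (k - 1) := Nat.one_le_pow _ _ (by omega)
    have hA : p ^ (k - 1) ≤ 2 * g := by
      calc p ^ (k - 1) = 1 * p ^ (k - 1) := (one_mul _).symm
        _ ≤ (p - 1) * p ^ (k - 1) := Nat.mul_le_mul_right _ (by omega)
        _ ≤ 2 * g := h1
    have hB : p ≤ 2 * g + 1 := by
      have : p - 1 ≤ 2 * g := by
        calc p - 1 = (p - 1) * 1 := (mul_one _).symm
          _ ≤ (p - 1) * p ^ (k - 1) := Nat.mul_le_mul_left _ hpow1
          _ ≤ 2 * g := h1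
      omega
    calc p ^ k = p ^ (k - 1 + 1) := by congr 1; omega
      _ = p ^ (k - 1) * p := pow_succ _ _
      _ ≤ (2 * g) * (2 * g + 1) := Nat.mul_le_mul hA hB
  have hfin : S.Finite :=
    Set.Finite.subset (Set.finite_Iic (2 * g * (2 * g + 1))) (fun n hn => hM n hn)
  rw [finprod_mem_eq_finite_toFinset_prod _ hfin]
  set T := hfin.toFinset with hT
  -- card bound via minFac
  have hcard : T.card ≤ 2 * g := by
    have h1 : ∀ n ∈ T, n.minFac ∈ Finset.Icc 2 (2 * g + 1) := by
      intro n hn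
      rw [hT, Set.Finite.mem_toFinset] at hn
      obtain ⟨p, k, hp, hk, rfl, h1, h2⟩ := hn
      rw [hp.pow_minFac (by omega)]
      simp only [Finset.mem_Icc]
      refine ⟨hp.two_le, ?_⟩
      have hpow1 : 1 ≤ p ^ (k - 1) := Nat.one_le_pow _ _ hp.pos
      have : p - 1 ≤ 2 * g := by
        calc p - 1 = (p - 1) * 1 := (mul_one _).symm
          _ ≤ (p - 1) * p ^ (k - 1) := Nat.mul_le_mul_left _ hpow1
          _ ≤ 2 * g := h1
      have := hp.two_le
      omega
    have h2 : Set.InjOn Nat.minFac T := by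
      intro a ha b hb hab
      rw [hT, Set.Finite.coe_toFinset] at ha hb
      have ha' : a ∈ S := ha
      have hb' : b ∈ S := hb
      obtain ⟨p, k, hp, hk, rfl, ha1, ha2⟩ := ha'
      obtain ⟨q, l, hq, hl, rfl, hb1, hb2⟩ := hb'
      rw [hp.pow_minFac (by omega), hq.pow_minFac (by omega)] at hab
      subst hab
      have hp1 : 1 ≤ p := hp.one_lt.le
      have hk2 : k = l := by
        by_contra hne
        rcases Nat.lt_or_ge k l with h | h
        · have hkl : k ≤ l - 1 := by omega
          have h3 : (p - 1) * p ^ k ≤ (p - 1) * p ^ (l - 1) :=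
            Nat.mul_le_mul_left _ (Nat.pow_le_pow_right hp1 hkl)
          exact absurd ((ha2.trans_le h3).trans_le hb1) (lt_irrefl _)
        · have hkl : l ≤ k - 1 := by omega
          have h3 : (p - 1) * p ^ l ≤ (p - 1) * p ^ (k - 1) :=
            Nat.mul_le_mul_left _ (Nat.pow_le_pow_right hp1 hkl)
          exact absurd ((hb2.trans_le h3).trans_le ha1) (lt_irrefl _)
      rw [hk2]
    calc T.card ≤ (Finset.Icc 2 (2 * g + 1)).card :=
          Finset.card_le_card_of_injOn _ h1 h2
      _ = 2 * g := by rw [Nat.card_Icc]; omega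
  have hprod : ∏ n ∈ T, n ≤ (2 * g * (2 * g + 1)) ^ T.card := by
    apply Finset.prod_le_pow_card
    intro n hn
    exact hM n ((Set.Finite.mem_toFinset hfin).mp hn)
  have hM1 : 0 < 2 * g * (2 * g + 1) := by positivity
  have hMlt : 2 * g * (2 * g + 1) < 12 ^ (2 * g) := by
    have hg2 : g < 2 ^ g := Nat.lt_two_pow_self (n := g)
    have hg4 : g ^ 2 < 4 ^ g := by
      calc g ^ 2 < (2 ^ g) ^ 2 := Nat.pow_lt_pow_left hg2 (by norm_num)
        _ = 4 ^ g := by rw [← pow_mul, mul_comm, pow_mul]; norm_num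
    have h144 : (12:ℕ) ^ (2 * g) = 144 ^ g := by
      rw [pow_mul]; norm_num
    have h36 : 36 * 4 ^ g ≤ 144 ^ g := by
      have : (144:ℕ) ^ g = 36 ^ g * 4 ^ g := by
        rw [← mul_pow]; norm_num
      rw [this]
      exact Nat.mul_le_mul_right _ (le_trans (by norm_num) (Nat.pow_le_pow_right (by norm_num) hg))
    have hle : 2 * g * (2 * g + 1) ≤ 6 * g ^ 2 := by nlinarith
    calc 2 * g * (2 * g + 1) ≤ 6 * g ^ 2 := hle
      _ < 6 * 4 ^ g := by omega
      _ ≤ 36 * 4 ^ g := by omega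
      _ ≤ 144 ^ g := h36
      _ = 12 ^ (2 * g) := h144.symm
  calc ∏ n ∈ T, n ≤ (2 * g * (2 * g + 1)) ^ T.card := hprod
    _ ≤ (2 * g * (2 * g + 1)) ^ (2 * g) := Nat.pow_le_pow_right hM1 hcard
    _ < (12 ^ (2 * g)) ^ (2 * g) := Nat.pow_lt_pow_left hMlt (by omega)
    _ = 12 ^ (4 * g ^ 2) := by rw [← pow_mul]; congr 1; ring
end

section
/- Let k be a field and let K and F be finite separable field extensions of k. Let W be a finitely generated module over the k-algebra K ⊗_k F. Then there is an isomorphism of K ⊗_k F-modules Hom_K(W, K) ≅ Hom_F(W, F), where on Hom_K(W, K) the field K acts via its action on the target K and F acts by precomposition with the F-module structure of W, and symmetrically on Hom_F(W, F), with K acting by precomposition and F via the target. In particular, for each of the two Hom-modules the map ℓ ↦ Tr∘ℓ (composition with the trace of the respective extension of k) identifies it K ⊗_k F-linearly with Hom_k(W, k). -/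
open Module

section aux
variable (k K W : Type*) [Field k] [Field K] [Algebra k K] [FiniteDimensional k K]
  [Algebra.IsSeparable k K] [AddCommGroup W] [Module k W] [Module K W]
  [IsScalarTower k K W] [FiniteDimensional k W]

/-- Composition with trace, as a k-linear map. -/
noncomputable def traceT : (W →ₗ[K] K) →ₗ[k] (W →ₗ[k] k) where
  toFun f := (Algebra.trace k K).comp (f.restrictScalars k)
  map_add' f g := by ext w; simp
  map_smul' a f := by ext w; simp

omit [FiniteDimensional k K] [Algebra.IsSeparable k K] [FiniteDimensional k W] in
lemma traceT_apply (f : W →ₗ[K] K) (w : W) :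
    traceT k K W f w = Algebra.trace k K (f w) := rfl

lemma traceT_bijective : Function.Bijective (traceT k K W) := by
  have hD : FiniteDimensional K W := FiniteDimensional.right k K W
  have hinj : Function.Injective (traceT k K W) := by
    rw [← LinearMap.ker_eq_bot, LinearMap.ker_eq_bot']
    intro f hf
    ext w
    refine (traceForm_nondegenerate k K).1 (f w) (fun c => ?_)
    have h1 : traceT k K W f (c • w) = 0 := by rw [hf]; rfl
    rw [traceT_apply, map_smul, smul_eq_mul] at h1
    simpa [Algebra.traceForm_apply, mul_comm] using h1
  have hdim : finrank k (W →ₗ[K] K) = finrank k (W →ₗ[k] k) := by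
    rw [Module.finrank_linearMap, Module.finrank_linearMap, finrank_self, mul_one,
      mul_comm, Module.finrank_mul_finrank]
  exact ⟨hinj, (LinearMap.injective_iff_surjective_of_finrank_eq_finrank hdim).mp hinj⟩

end aux

/-- Scalar multiplication by an element of a commuting action, as a linear map. -/
def smulLinearMap (K F W : Type*) [Semiring K] [Semiring F] [AddCommMonoid W]
    [Module K W] [Module F W] [SMulCommClass K F W] (c : K) : W →ₗ[F] W where
  toFun w := c • w
  map_add' := smul_add c
  map_smul' d w := smul_comm c d w

/-- Let `k` be a field, `K` and `F` finite separable extensions of `k`, and `W` a finitely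
generated module over `K ⊗_k F` (encoded as a space with commuting `K`- and `F`-actions,
compatible over `k`, finite-dimensional over `K`).  Then `Hom_K(W, K) ≅ Hom_F(W, F)` as
`K ⊗_k F`-modules, where `K` acts on `Hom_K(W, K)` via the target and `F` by precomposition,
and symmetrically on `Hom_F(W, F)`.  In particular, composition with the trace identifies
each of these Hom-modules `K ⊗_k F`-linearly with `Hom_k(W, k)`. -/
theorem stmt13 (k K F W : Type*) [Field k] [Field K] [Field F]
    [Algebra k K] [Algebra k F] [FiniteDimensional k K] [FiniteDimensional k F]
    [Algebra.IsSeparable k K] [Algebra.IsSeparable k F]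
    [AddCommGroup W] [Module k W] [Module K W] [Module F W]
    [IsScalarTower k K W] [IsScalarTower k F W] [SMulCommClass K F W]
    [FiniteDimensional K W] :
    (∃ e : (W →ₗ[K] K) ≃+ (W →ₗ[F] F),
        (∀ (c : K) (f : W →ₗ[K] K) (w : W), e (c • f) w = e f (c • w)) ∧
        (∀ (d : F) (φ : W →ₗ[F] F) (w : W), e.symm (d • φ) w = e.symm φ (d • w))) ∧
    (Function.Bijective (fun f : W →ₗ[K] K =>
        ((Algebra.trace k K).comp (f.restrictScalars k) : W →ₗ[k] k)) ∧
      ∀ (c : K) (f : W →ₗ[K] K) (w : W),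
        (Algebra.trace k K).comp ((c • f).restrictScalars k) w
          = (Algebra.trace k K).comp (f.restrictScalars k) (c • w)) ∧
    (Function.Bijective (fun φ : W →ₗ[F] F =>
        ((Algebra.trace k F).comp (φ.restrictScalars k) : W →ₗ[k] k)) ∧
      ∀ (d : F) (φ : W →ₗ[F] F) (w : W),
        (Algebra.trace k F).comp ((d • φ).restrictScalars k) w
          = (Algebra.trace k F).comp (φ.restrictScalars k) (d • w)) := by
  have _i : FiniteDimensional k W := FiniteDimensional.trans k K W
  have _i2 : SMulCommClass F K W := SMulCommClass.symm K F W
  have hK := traceT_bijective k K W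
  have hF := traceT_bijective k F W
  refine ⟨?_, ⟨hK, ?_⟩, ⟨hF, ?_⟩⟩
  · set EK : (W →ₗ[K] K) ≃ₗ[k] (W →ₗ[k] k) := LinearEquiv.ofBijective _ hK with hEK
    set EF : (W →ₗ[F] F) ≃ₗ[k] (W →ₗ[k] k) := LinearEquiv.ofBijective _ hF with hEF
    refine ⟨(EK ≪≫ₗ EF.symm).toAddEquiv, fun c f w => ?_, fun d φ w => ?_⟩
    · have key : EF.symm (EK (c • f)) = (EF.symm (EK f)).comp (smulLinearMap K F W c) := by
        apply EF.injective
        rw [LinearEquiv.apply_symm_apply]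
        ext w'
        have h1 : (EF ((EF.symm (EK f)).comp (smulLinearMap K F W c))) w'
            = (EF (EF.symm (EK f))) (c • w') := rfl
        rw [h1, LinearEquiv.apply_symm_apply]
        show Algebra.trace k K ((c • f) w') = Algebra.trace k K (f (c • w'))
        rw [LinearMap.smul_apply, f.map_smul c w']
      exact congrArg (fun g : W →ₗ[F] F => g w) key
    · have key : EK.symm (EF (d • φ)) = (EK.symm (EF φ)).comp (smulLinearMap F K W d) := by
        apply EK.injective
        rw [LinearEquiv.apply_symm_apply]
        ext w'
        have h1 : (EK ((EK.symm (EF φ)).comp (smulLinearMap F K W d))) w'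
            = (EK (EK.symm (EF φ))) (d • w') := rfl
        rw [h1, LinearEquiv.apply_symm_apply]
        show Algebra.trace k F ((d • φ) w') = Algebra.trace k F (φ (d • w'))
        rw [LinearMap.smul_apply, φ.map_smul d w']
      exact congrArg (fun g : W →ₗ[K] K => g w) key
  · intro c f w
    show Algebra.trace k K ((c • f) w) = Algebra.trace k K (f (c • w))
    rw [LinearMap.smul_apply, f.map_smul c w]
  · intro d φ w
    show Algebra.trace k F ((d • φ) w) = Algebra.trace k F (φ (d • w))
    rw [LinearMap.smul_apply, φ.map_smul d w]
end
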